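/- arXiv:0812.0899 — 4 statements merged into one kernel-verified Lean document; each statement's English description precedes it below -/
import Mathlib

section
/- Let M be the 2×2 real matrix with rows (1, pα) and (qβ, 1 + pα·qβ) where p, q ∈ ℕ are positive and α, β > 0. Let κ = min(pα, qβ) and λ = √(1 + κ²). Then for every w = (u,v) with uv > 0, ‖M·w‖ ≥ λ·‖w‖. -/
/-- Uniform expansion of the return-map derivative:
`M = (1, pα; qβ, 1 + pα·qβ)` expands Euclidean norm on the cone `{uv > 0}`
by at least `λ = √(1 + κ²)`, where `κ = min(pα, qβ)`. -/
theorem return_map_expansion (p q : ℕ) (hp : 0 < p) (hq : 0 < q) (α β : ℝ)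
    (hα : 0 < α) (hβ : 0 < β) (u v : ℝ) (hw : u * v > 0) :
    Real.sqrt
        ((Matrix.mulVec !![1, (p : ℝ) * α; (q : ℝ) * β, 1 + (p : ℝ) * α * ((q : ℝ) * β)]
            ![u, v] 0) ^ 2 +
          (Matrix.mulVec !![1, (p : ℝ) * α; (q : ℝ) * β, 1 + (p : ℝ) * α * ((q : ℝ) * β)]
            ![u, v] 1) ^ 2) ≥
      Real.sqrt (1 + min ((p : ℝ) * α) ((q : ℝ) * β) ^ 2) * Real.sqrt (u ^ 2 + v ^ 2) := by
  set a : ℝ := (p : ℝ) * α with ha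
  set b : ℝ := (q : ℝ) * β with hb
  have hap : 0 < a := by positivity
  have hbp : 0 < b := by positivity
  have hka : min a b ≤ a := min_le_left a b
  have hkb : min a b ≤ b := min_le_right a b
  have hkp : 0 < min a b := lt_min hap hbp
  rw [ge_iff_le, ← Real.sqrt_mul (by positivity)]
  apply Real.sqrt_le_sqrt
  simp [Matrix.mulVec, dotProduct, Fin.sum_univ_two]
  have h1 : min a b ^ 2 ≤ a ^ 2 := by nlinarith
  have h2 : min a b ^ 2 ≤ b ^ 2 := by nlinarith
  nlinarith [mul_nonneg (sub_nonneg.2 h2) (sq_nonneg u), mul_nonneg (sub_nonneg.2 h1) (sq_nonneg v),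
    mul_nonneg (mul_pos hap hbp).le (sq_nonneg v), mul_nonneg (sq_nonneg (a * b)) (sq_nonneg v),
    mul_pos hap hw, mul_pos hbp hw, mul_pos (mul_pos hap (mul_pos hbp hbp)) hw]
end

section
/- Let H = G ∘ F be a composition of two maps on a space X, let P, Q ⊆ X with G = id on the complement of Q intersected with the relevant orbit, and suppose z satisfies: Fⁿ(z) ∉ Q for 0 < n < p and F^p(z) ∈ Q, and G acts on the subsequent points with Gⁿ(F^p(z))-images staying out of P for 0 < n < q. Then H^{p+q-1}(z) = G^q(F^p(z)). -/
/-- First-return structure of the linked twist map `H = G ∘ F`: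
if the first `p` iterates of `F` stay out of `Q` (where `G` is the identity)
until `F^p(z) ∈ Q`, and the subsequent `G`-iterates stay out of `P` (where `F`
is the identity) until the `q`-th, then `H^{p+q-1}(z) = G^q(F^p(z))`. -/
theorem first_return_formula {X : Type*} (F G : X → X)
    (hFbij : Function.Bijective F) (hGbij : Function.Bijective G)
    (P Q : Set X) (hGid : ∀ w, w ∉ Q → G w = w) (hFid : ∀ w, w ∉ P → F w = w)
    (z : X) (p q : ℕ) (hp : 1 ≤ p) (hq : 1 ≤ q)
    (hFout : ∀ n, 0 < n → n < p → F^[n] z ∉ Q) (hFin : F^[p] z ∈ Q)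
    (hGout : ∀ n, 0 < n → n < q → G^[n] (F^[p] z) ∉ P) :
    (G ∘ F)^[p + q - 1] z = G^[q] (F^[p] z) := by
  have h1 : ∀ k, k ≤ p - 1 → (G ∘ F)^[k] z = F^[k] z := by
    intro k hk
    induction k with
    | zero => simp
    | succ n ih =>
      rw [Function.iterate_succ_apply' (G ∘ F), ih (Nat.le_of_succ_le hk),
        Function.comp_apply, ← Function.iterate_succ_apply' F n z]
      exact hGid _ (hFout (n + 1) (Nat.succ_pos n) (by omega))
  have h2 : ∀ k, k ≤ q → 1 ≤ k → (G ∘ F)^[p - 1 + k] z = G^[k] (F^[p] z) := by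
    intro k hk hk1
    induction k with
    | zero => omega
    | succ n ih =>
      rw [show p - 1 + (n + 1) = (p - 1 + n) + 1 from rfl,
        Function.iterate_succ_apply' (G ∘ F)]
      rcases Nat.eq_zero_or_pos n with hn | hn
      · subst hn
        rw [Nat.add_zero, h1 (p - 1) le_rfl, Function.comp_apply,
          ← Function.iterate_succ_apply' F (p - 1) z,
          show (p - 1).succ = p from by omega]
        simp
      · rw [ih (by omega) hn, Function.comp_apply,
          hFid _ (hGout n hn (by omega))]
        exact (Function.iterate_succ_apply' G n _).symm
  have hpq : p + q - 1 = p - 1 + q := by omega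
  rw [hpq]
  exact h2 q le_rfl hq
end

section
/- Let M_i = (1, a_i; b_i, 1 + a_i b_i) for i = 1,…,n with all a_i, b_i > 0, and set λ_i = √(1 + min(a_i, b_i)²). Then for any w = (u,v) with uv > 0, ‖M_n ⋯ M_2 M_1 w‖ ≥ (∏_{i=1}^n λ_i)·‖w‖, and in particular if λ = min_i λ_i then ‖M_n⋯M_1 w‖ ≥ λⁿ‖w‖. -/
lemma one_step (a b u v : ℝ) (ha : 0 < a) (hb : 0 < b) (hw : u * v > 0) :
    (u + a * v) * (b * u + (1 + a * b) * v) > 0 ∧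
    (1 + min a b ^ 2) * (u ^ 2 + v ^ 2) ≤ (u + a * v) ^ 2 + (b * u + (1 + a * b) * v) ^ 2 := by
  have huv' : 0 < (u + a * v) * v := by nlinarith [sq_nonneg v]
  have hu' : u ^ 2 ≤ (u + a * v) ^ 2 := by nlinarith [sq_nonneg v]
  constructor
  · nlinarith [sq_nonneg (u + a * v), mul_pos hb huv']
  · rcases le_total a b with h | h
    · rw [min_eq_left h]
      nlinarith [mul_pos ha hw, mul_pos hb huv',
        mul_nonneg (mul_nonneg (sub_nonneg.2 h) (by linarith : (0:ℝ) ≤ a + b)) (sq_nonneg (u + a*v)),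
        mul_nonneg (sq_nonneg a) (by linarith : (0:ℝ) ≤ (u + a*v)^2 - u^2)]
    · rw [min_eq_right h]
      nlinarith [mul_pos ha hw, mul_pos hb huv',
        mul_nonneg (sq_nonneg b) (by linarith : (0:ℝ) ≤ (u + a*v)^2 - u^2),
        mul_nonneg (mul_nonneg (sub_nonneg.2 h) ha.le) (sq_nonneg v)]

lemma sq_expansion (n : ℕ) (a b : Fin n → ℝ) (ha : ∀ i, 0 < a i)
    (hb : ∀ i, 0 < b i) (u v : ℝ) (hw : u * v > 0) :
    ((List.ofFn fun i : Fin n =>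
        (!![1, a i; b i, 1 + a i * b i] : Matrix (Fin 2) (Fin 2) ℝ)).reverse.prod.mulVec ![u, v] 0) *
      ((List.ofFn fun i : Fin n =>
        (!![1, a i; b i, 1 + a i * b i] : Matrix (Fin 2) (Fin 2) ℝ)).reverse.prod.mulVec ![u, v] 1) > 0 ∧
    (∏ i : Fin n, (1 + min (a i) (b i) ^ 2)) * (u ^ 2 + v ^ 2) ≤
      ((List.ofFn fun i : Fin n =>
        (!![1, a i; b i, 1 + a i * b i] : Matrix (Fin 2) (Fin 2) ℝ)).reverse.prod.mulVec ![u, v] 0) ^ 2 +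
      ((List.ofFn fun i : Fin n =>
        (!![1, a i; b i, 1 + a i * b i] : Matrix (Fin 2) (Fin 2) ℝ)).reverse.prod.mulVec ![u, v] 1) ^ 2 := by
  induction n generalizing u v with
  | zero =>
    simp [Matrix.mulVec_one]
    exact hw
  | succ n ih =>
    have hstep := one_step (a 0) (b 0) u v (ha 0) (hb 0) hw
    set u' := u + a 0 * v with hu'
    set v' := b 0 * u + (1 + a 0 * b 0) * v with hv'
    have key : ∀ j : Fin 2,
        (List.ofFn fun i : Fin (n+1) =>
          (!![1, a i; b i, 1 + a i * b i] : Matrix (Fin 2) (Fin 2) ℝ)).reverse.prod.mulVec ![u, v] j =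
        (List.ofFn fun i : Fin n =>
          (!![1, a (i.succ); b (i.succ), 1 + a (i.succ) * b (i.succ)] : Matrix (Fin 2) (Fin 2) ℝ)).reverse.prod.mulVec ![u', v'] j := by
      intro j
      rw [List.ofFn_succ, List.reverse_cons, List.prod_append, List.prod_singleton,
        ← Matrix.mulVec_mulVec]
      congr 1
      funext k
      fin_cases k <;> simp [Matrix.mulVec, dotProduct, Fin.sum_univ_two, hu', hv']
    rw [key 0, key 1, Fin.prod_univ_succ]
    have ih' := ih (fun i => a i.succ) (fun i => b i.succ) (fun i => ha i.succ)
      (fun i => hb i.succ) u' v' hstep.1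
    refine ⟨ih'.1, ?_⟩
    have hprod : (0:ℝ) ≤ ∏ i : Fin n, (1 + min (a i.succ) (b i.succ) ^ 2) := by
      apply Finset.prod_nonneg
      intro i _
      positivity
    calc (1 + min (a 0) (b 0) ^ 2) * (∏ i : Fin n, (1 + min (a i.succ) (b i.succ) ^ 2)) * (u ^ 2 + v ^ 2)
        = (∏ i : Fin n, (1 + min (a i.succ) (b i.succ) ^ 2)) * ((1 + min (a 0) (b 0) ^ 2) * (u ^ 2 + v ^ 2)) := by ring
      _ ≤ (∏ i : Fin n, (1 + min (a i.succ) (b i.succ) ^ 2)) * (u' ^ 2 + v' ^ 2) := by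
          exact mul_le_mul_of_nonneg_left hstep.2 hprod
      _ ≤ _ := ih'.2

/-- Composition of return-map expansions: a product of matrices
`M_i = (1, a_i; b_i, 1 + a_i b_i)` with `a_i, b_i > 0` expands the Euclidean
norm of a cone vector by at least `∏ λ_i`, where `λ_i = √(1 + min(a_i,b_i)²)`;
in particular by `λⁿ` where `λ = min_i λ_i`. -/
theorem composed_expansion (n : ℕ) (a b : Fin n → ℝ) (ha : ∀ i, 0 < a i)
    (hb : ∀ i, 0 < b i) (u v : ℝ) (hw : u * v > 0) :
    (Real.sqrt
        (((List.ofFn fun i : Fin n =>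
              (!![1, a i; b i, 1 + a i * b i] : Matrix (Fin 2) (Fin 2) ℝ)).reverse.prod.mulVec
            ![u, v] 0) ^ 2 +
          ((List.ofFn fun i : Fin n =>
              (!![1, a i; b i, 1 + a i * b i] : Matrix (Fin 2) (Fin 2) ℝ)).reverse.prod.mulVec
            ![u, v] 1) ^ 2) ≥
      (∏ i : Fin n, Real.sqrt (1 + min (a i) (b i) ^ 2)) * Real.sqrt (u ^ 2 + v ^ 2)) ∧
    ∀ lam : ℝ,
      IsGreatest {l : ℝ | ∀ i : Fin n, l ≤ Real.sqrt (1 + min (a i) (b i) ^ 2)} lam →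
      Real.sqrt
          (((List.ofFn fun i : Fin n =>
                (!![1, a i; b i, 1 + a i * b i] : Matrix (Fin 2) (Fin 2) ℝ)).reverse.prod.mulVec
              ![u, v] 0) ^ 2 +
            ((List.ofFn fun i : Fin n =>
                (!![1, a i; b i, 1 + a i * b i] : Matrix (Fin 2) (Fin 2) ℝ)).reverse.prod.mulVec
              ![u, v] 1) ^ 2) ≥
        lam ^ n * Real.sqrt (u ^ 2 + v ^ 2) := by
  obtain ⟨-, hsq⟩ := sq_expansion n a b ha hb u v hw
  have hmain :
      (∏ i : Fin n, Real.sqrt (1 + min (a i) (b i) ^ 2)) * Real.sqrt (u ^ 2 + v ^ 2) ≤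
      Real.sqrt
        (((List.ofFn fun i : Fin n =>
              (!![1, a i; b i, 1 + a i * b i] : Matrix (Fin 2) (Fin 2) ℝ)).reverse.prod.mulVec
            ![u, v] 0) ^ 2 +
          ((List.ofFn fun i : Fin n =>
              (!![1, a i; b i, 1 + a i * b i] : Matrix (Fin 2) (Fin 2) ℝ)).reverse.prod.mulVec
            ![u, v] 1) ^ 2) := by
    rw [Real.le_sqrt (by positivity) (add_nonneg (sq_nonneg _) (sq_nonneg _))]
    calc ((∏ i : Fin n, Real.sqrt (1 + min (a i) (b i) ^ 2)) * Real.sqrt (u ^ 2 + v ^ 2)) ^ 2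
        = (∏ i : Fin n, Real.sqrt (1 + min (a i) (b i) ^ 2) ^ 2) * Real.sqrt (u ^ 2 + v ^ 2) ^ 2 := by
          rw [mul_pow, Finset.prod_pow]
      _ = (∏ i : Fin n, (1 + min (a i) (b i) ^ 2)) * (u ^ 2 + v ^ 2) := by
          rw [Real.sq_sqrt (by positivity)]
          congr 1
          exact Finset.prod_congr rfl fun i _ => Real.sq_sqrt (by positivity)
      _ ≤ _ := hsq
  refine ⟨hmain, fun lam hlam => ?_⟩
  have hlam0 : 0 ≤ lam := hlam.2 fun i => Real.sqrt_nonneg _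
  have hpow : lam ^ n ≤ ∏ i : Fin n, Real.sqrt (1 + min (a i) (b i) ^ 2) := by
    calc lam ^ n = ∏ _i : Fin n, lam := by simp
      _ ≤ _ := Finset.prod_le_prod (fun i _ => hlam0) (fun i _ => hlam.1 i)
  exact le_trans (mul_le_mul_of_nonneg_right hpow (Real.sqrt_nonneg _)) hmain
end

section
/- Let T be a measure-preserving invertible transformation of a probability space (X,μ) and Y ⊆ X measurable with the property that μ-a.e. point of X visits Y infinitely often under forward iteration. Then for μ-a.e. x ∈ X, the visit frequency lim_{n→∞} (1/n)·#{1 ≤ k ≤ n : T^k(x) ∈ Y} exists and is strictly positive. -/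
open Filter MeasureTheory
open scoped Classical

set_option linter.unusedSectionVars false
set_option linter.unusedVariables false

section Maximal
variable {X : Type*} [MeasurableSpace X]

/-- `garMax τ g n x = max (0, S₁ x, ..., Sₙ x)` where `Sₖ` is the Birkhoff sum. -/
noncomputable def garMax (τ : X → X) (g : X → ℝ) : ℕ → X → ℝ
  | 0 => fun _ => 0
  | (n+1) => fun x => max 0 (g x + garMax τ g n (τ x))

variable {τ : X → X} {g : X → ℝ}

lemma garMax_nonneg (n : ℕ) (x : X) : 0 ≤ garMax τ g n x := by
  cases n with
  | zero => simp [garMax]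
  | succ n => exact le_max_left _ _

lemma garMax_mono (n : ℕ) (x : X) : garMax τ g n x ≤ garMax τ g (n+1) x := by
  induction n generalizing x with
  | zero => exact garMax_nonneg 1 x
  | succ n ih =>
      exact max_le_max le_rfl (add_le_add le_rfl (ih (τ x)))

lemma garMax_measurable (hτ : Measurable τ) (hg : Measurable g) (n : ℕ) :
    Measurable (garMax τ g n) := by
  induction n with
  | zero => exact measurable_const
  | succ n ih => exact measurable_const.max (hg.add (ih.comp hτ))

lemma garMax_le (n : ℕ) {C : ℝ} (hC : 0 ≤ C) (hg : ∀ x, |g x| ≤ C) (x : X) :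
    garMax τ g n x ≤ n * C := by
  induction n generalizing x with
  | zero => simp [garMax]
  | succ n ih =>
      refine max_le (by positivity) ?_
      have := (abs_le.1 (hg x)).2
      have := ih (τ x)
      push_cast
      nlinarith

lemma birkhoffSum_le_garMax : ∀ (k n : ℕ), k ≤ n → ∀ x : X,
    birkhoffSum τ g k x ≤ garMax τ g n x := by
  intro k
  induction k with
  | zero => intro n _ x; simpa [birkhoffSum] using garMax_nonneg n x
  | succ k ih =>
      rintro (_|n) hn x
      · omega
      · rw [birkhoffSum_succ']
        exact le_trans (add_le_add le_rfl (ih n (by omega) (τ x))) (le_max_right _ _)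

lemma exists_birkhoffSum_of_garMax_pos : ∀ (n : ℕ) (x : X), 0 < garMax τ g n x →
    ∃ k, garMax τ g n x ≤ birkhoffSum τ g k x := by
  intro n
  induction n with
  | zero => intro x h; simp [garMax] at h
  | succ n ih =>
      intro x h
      have hrec : garMax τ g (n+1) x = max 0 (g x + garMax τ g n (τ x)) := rfl
      have hpos : 0 < g x + garMax τ g n (τ x) := by
        by_contra hle
        push_neg at hle
        rw [hrec, max_eq_left hle] at h; exact lt_irrefl 0 h
      have heq : garMax τ g (n+1) x = g x + garMax τ g n (τ x) := by
        rw [hrec, max_eq_right hpos.le]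
      by_cases h0 : 0 < garMax τ g n (τ x)
      · obtain ⟨k, hk⟩ := ih (τ x) h0
        exact ⟨k+1, by rw [heq, birkhoffSum_succ']; exact add_le_add le_rfl hk⟩
      · have hz : garMax τ g n (τ x) = 0 := le_antisymm (not_lt.1 h0) (garMax_nonneg _ _)
        exact ⟨1, by rw [heq, hz, birkhoffSum_one]; simp⟩

lemma garMax_succ_eq_of_pos {n : ℕ} {x : X} (h : 0 < garMax τ g (n+1) x) :
    garMax τ g (n+1) x = g x + garMax τ g n (τ x) := by
  have hrec : garMax τ g (n+1) x = max 0 (g x + garMax τ g n (τ x)) := rfl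
  have hpos : 0 < g x + garMax τ g n (τ x) := by
    by_contra hle
    push_neg at hle
    rw [hrec, max_eq_left hle] at h; exact lt_irrefl 0 h
  rw [hrec, max_eq_right hpos.le]

lemma garMax_key (n : ℕ) (x : X) :
    garMax τ g (n+1) x - garMax τ g n (τ x) ≤
      Set.indicator {y | 0 < garMax τ g (n+1) y} g x := by
  by_cases h : 0 < garMax τ g (n+1) x
  · rw [Set.indicator_of_mem (show x ∈ {y | 0 < garMax τ g (n+1) y} from h) g, garMax_succ_eq_of_pos h]; simp
  · have hz : garMax τ g (n+1) x = 0 :=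
      le_antisymm (not_lt.1 h) (garMax_nonneg _ _)
    rw [Set.indicator_of_notMem (show x ∉ {y | 0 < garMax τ g (n+1) y} from h) g, hz]
    simpa using garMax_nonneg n (τ x)

theorem maximal_ergodic (ν : Measure X) [IsFiniteMeasure ν] {τ : X → X}
    (hτm : Measurable τ) (hτ : MeasurePreserving τ ν ν) {g : X → ℝ}
    (hg : Measurable g) {C : ℝ} (hC : 0 ≤ C) (hgC : ∀ x, |g x| ≤ C) :
    0 ≤ ∫ x in {y | ∃ n, 0 < birkhoffSum τ g n y}, g x ∂ν := by
  set E : ℕ → Set X := fun n => {y | 0 < garMax τ g n y} with hE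
  have hEm : ∀ n, MeasurableSet (E n) := fun n =>
    measurableSet_lt measurable_const (garMax_measurable hτm hg n)
  have hEmono : Monotone E := monotone_nat_of_le_succ fun n x hx =>
    lt_of_lt_of_le hx (garMax_mono n x)
  have hEU : (⋃ n, E n) = {y | ∃ n, 0 < birkhoffSum τ g n y} := by
    ext x
    simp only [Set.mem_iUnion, Set.mem_setOf_eq, hE]
    constructor
    · rintro ⟨n, h⟩
      obtain ⟨k, hk⟩ := exists_birkhoffSum_of_garMax_pos n x h
      exact ⟨k, lt_of_lt_of_le h hk⟩
    · rintro ⟨n, h⟩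
      exact ⟨n, lt_of_lt_of_le h (birkhoffSum_le_garMax n n le_rfl x)⟩
  have hMint : ∀ n, Integrable (garMax τ g n) ν := fun n =>
    (integrable_const ((n : ℝ) * C)).mono'
      (garMax_measurable hτm hg n).aestronglyMeasurable
      (ae_of_all _ fun x => by
        rw [Real.norm_eq_abs, abs_of_nonneg (garMax_nonneg n x)]
        exact garMax_le n hC hgC x)
  have hgint : Integrable g ν :=
    (integrable_const C).mono' hg.aestronglyMeasurable
      (ae_of_all _ fun x => by rw [Real.norm_eq_abs]; exact hgC x)
  have hcomp : ∀ n, Integrable (fun x => garMax τ g n (τ x)) ν := fun n => by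
    have := (integrable_map_measure
        (garMax_measurable hτm hg n).aestronglyMeasurable.aemeasurable.aestronglyMeasurable
        hτm.aemeasurable (μ := ν)).1
    · exact this (by rw [hτ.map_eq]; exact hMint n)
  have hint_comp_eq : ∀ n, ∫ x, garMax τ g n (τ x) ∂ν = ∫ x, garMax τ g n x ∂ν := by
    intro n
    rw [← integral_map hτm.aemeasurable
      (by rw [hτ.map_eq]; exact (garMax_measurable hτm hg n).aestronglyMeasurable),
      hτ.map_eq]
  have hstep : ∀ n, 0 ≤ ∫ x in E n, g x ∂ν := by
    rintro (_|n)
    · have : E 0 = ∅ := by ext x; simp [hE, garMax]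
      rw [this]; simp
    · have h1 : ∫ x, (garMax τ g (n+1) x - garMax τ g n (τ x)) ∂ν ≤
          ∫ x, Set.indicator (E (n+1)) g x ∂ν :=
        integral_mono ((hMint (n+1)).sub (hcomp n))
          (hgint.indicator (hEm (n+1))) (garMax_key n)
      rw [integral_indicator (hEm (n+1))] at h1
      rw [integral_sub (hMint (n+1)) (hcomp n), hint_comp_eq n] at h1
      have h2 : ∫ x, garMax τ g n x ∂ν ≤ ∫ x, garMax τ g (n+1) x ∂ν :=
        integral_mono (hMint n) (hMint (n+1)) (garMax_mono n)
      linarith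
  have htend := tendsto_setIntegral_of_monotone hEm hEmono
    (hgint.integrableOn (s := ⋃ n, E n))
  rw [hEU] at htend
  exact ge_of_tendsto' htend hstep

end Maximal

section Lims

lemma real_le_of_forall_pos_le_add {a b : ℝ} (h : ∀ ε : ℝ, 0 < ε → a ≤ b + ε) : a ≤ b := by
  by_contra hlt; push_neg at hlt
  have := h ((a - b)/2) (by linarith); linarith

lemma liminf_le_liminf_of_tendsto_sub {u w : ℕ → ℝ}
    (hw0 : ∀ n, 0 ≤ w n) (hw1 : ∀ n, w n ≤ 1)
    (hd : Tendsto (fun n => u n - w n) atTop (nhds 0)) :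
    liminf u atTop ≤ liminf w atTop := by
  have hwb : IsBoundedUnder (· ≤ ·) atTop w := isBoundedUnder_of ⟨1, hw1⟩
  have hub : IsBoundedUnder (· ≥ ·) atTop u := by
    apply isBoundedUnder_of_eventually_ge (a := (-1 : ℝ))
    filter_upwards [hd.eventually_const_lt (show (-1:ℝ) < 0 by norm_num)] with n hn
    have := hw0 n; linarith
  apply real_le_of_forall_pos_le_add
  intro ε hε
  have hev : ∀ᶠ n in atTop, u n ≤ w n + ε/2 := by
    filter_upwards [hd.eventually_lt_const (half_pos hε)] with n hn
    linarith
  have hfreq : ∃ᶠ n in atTop, w n ≤ liminf w atTop + ε/2 := by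
    by_contra hcon
    rw [not_frequently] at hcon
    have hle : liminf w atTop + ε/2 ≤ liminf w atTop :=
      le_liminf_of_le hwb.isCoboundedUnder_ge
        (hcon.mono fun n hn => le_of_lt (not_le.1 hn))
    linarith
  have hfru : ∃ᶠ n in atTop, u n ≤ liminf w atTop + ε :=
    (hfreq.and_eventually hev).mono fun n ⟨h1, h2⟩ => by linarith
  exact liminf_le_of_frequently_le hfru hub

lemma limsup_le_limsup_of_tendsto_sub {u w : ℕ → ℝ}
    (hw0 : ∀ n, 0 ≤ w n) (hw1 : ∀ n, w n ≤ 1)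
    (hd : Tendsto (fun n => u n - w n) atTop (nhds 0)) :
    limsup u atTop ≤ limsup w atTop := by
  have hwble : IsBoundedUnder (· ≤ ·) atTop w := isBoundedUnder_of ⟨1, hw1⟩
  have hub : IsBoundedUnder (· ≥ ·) atTop u := by
    apply isBoundedUnder_of_eventually_ge (a := (-1 : ℝ))
    filter_upwards [hd.eventually_const_lt (show (-1:ℝ) < 0 by norm_num)] with n hn
    have := hw0 n; linarith
  apply real_le_of_forall_pos_le_add
  intro ε hε
  have hev : ∀ᶠ n in atTop, u n ≤ w n + ε/2 := by
    filter_upwards [hd.eventually_lt_const (half_pos hε)] with n hn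
    linarith
  have hev2 : ∀ᶠ n in atTop, w n ≤ limsup w atTop + ε/2 := by
    by_contra hcon
    rw [not_eventually] at hcon
    have hle : limsup w atTop + ε/2 ≤ limsup w atTop :=
      le_limsup_of_frequently_le
        (hcon.mono fun n hn => le_of_lt (not_le.1 hn)) hwble
    linarith
  have : ∀ᶠ n in atTop, u n ≤ limsup w atTop + ε := by
    filter_upwards [hev, hev2] with n h1 h2; linarith
  exact limsup_le_of_le hub.isCoboundedUnder_le this

lemma liminf_eq_of_tendsto_sub {u w : ℕ → ℝ}
    (hu0 : ∀ n, 0 ≤ u n) (hu1 : ∀ n, u n ≤ 1)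
    (hw0 : ∀ n, 0 ≤ w n) (hw1 : ∀ n, w n ≤ 1)
    (hd : Tendsto (fun n => u n - w n) atTop (nhds 0)) :
    liminf u atTop = liminf w atTop := by
  have hd' : Tendsto (fun n => w n - u n) atTop (nhds 0) := by
    have := hd.neg; simpa using this
  exact le_antisymm (liminf_le_liminf_of_tendsto_sub hw0 hw1 hd)
    (liminf_le_liminf_of_tendsto_sub hu0 hu1 hd')

lemma limsup_eq_of_tendsto_sub {u w : ℕ → ℝ}
    (hu0 : ∀ n, 0 ≤ u n) (hu1 : ∀ n, u n ≤ 1)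
    (hw0 : ∀ n, 0 ≤ w n) (hw1 : ∀ n, w n ≤ 1)
    (hd : Tendsto (fun n => u n - w n) atTop (nhds 0)) :
    limsup u atTop = limsup w atTop := by
  have hd' : Tendsto (fun n => w n - u n) atTop (nhds 0) := by
    have := hd.neg; simpa using this
  exact le_antisymm (limsup_le_limsup_of_tendsto_sub hw0 hw1 hd)
    (limsup_le_limsup_of_tendsto_sub hu0 hu1 hd')

end Lims

section Osc
variable {X : Type*} [MeasurableSpace X]

lemma avg_diff_tendsto {τ : X → X} {f : X → ℝ}
    (hf0 : ∀ x, 0 ≤ f x) (hf1 : ∀ x, f x ≤ 1) (x : X) :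
    Tendsto (fun n : ℕ => (n:ℝ)⁻¹ * birkhoffSum τ f n (τ x)
      - (n:ℝ)⁻¹ * birkhoffSum τ f n x) atTop (nhds 0) := by
  apply squeeze_zero_norm (a := fun n : ℕ => (n:ℝ)⁻¹)
  · intro n
    rw [← mul_sub, birkhoffSum_apply_sub_birkhoffSum]
    rw [norm_mul, norm_inv]
    have h1 : ‖f (τ^[n] x) - f x‖ ≤ 1 := by
      rw [Real.norm_eq_abs, abs_sub_le_iff]
      constructor <;> [have := hf1 (τ^[n] x); have := hf1 x] <;>
        [have := hf0 x; have := hf0 (τ^[n] x)] <;> linarith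
    calc ‖(n:ℝ)‖⁻¹ * ‖f (τ^[n] x) - f x‖ ≤ ‖(n:ℝ)‖⁻¹ * 1 := by
          exact mul_le_mul_of_nonneg_left h1 (by positivity)
      _ = (n:ℝ)⁻¹ := by rw [mul_one, Real.norm_natCast]
  · exact tendsto_inv_atTop_nhds_zero_nat

lemma sum_nonneg_avg {τ : X → X} {f : X → ℝ}
    (hf0 : ∀ x, 0 ≤ f x) (hf1 : ∀ x, f x ≤ 1) (n : ℕ) (x : X) :
    0 ≤ (n:ℝ)⁻¹ * birkhoffSum τ f n x ∧ (n:ℝ)⁻¹ * birkhoffSum τ f n x ≤ 1 := by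
  have h0 : 0 ≤ birkhoffSum τ f n x :=
    Finset.sum_nonneg fun k _ => hf0 _
  have h1 : birkhoffSum τ f n x ≤ n := by
    calc birkhoffSum τ f n x ≤ (Finset.range n).card • (1:ℝ) :=
          Finset.sum_le_card_nsmul _ _ _ fun k _ => hf1 _
      _ = n := by simp
  constructor
  · positivity
  · rcases Nat.eq_zero_or_pos n with rfl | hn
    · simp
    · rw [inv_mul_le_iff₀ (by exact_mod_cast hn), mul_one]; exact h1

lemma oscillation_null (μ : Measure X) [IsFiniteMeasure μ]
    {τ : X → X} (hτm : Measurable τ) (hτ : MeasurePreserving τ μ μ)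
    {f : X → ℝ} (hfm : Measurable f) (hf0 : ∀ x, 0 ≤ f x) (hf1 : ∀ x, f x ≤ 1)
    {a b : ℝ} (hab : a < b) :
    μ ({x | liminf (fun n : ℕ => (n:ℝ)⁻¹ * birkhoffSum τ f n x) atTop ≤ a}
      ∩ {x | b ≤ limsup (fun n : ℕ => (n:ℝ)⁻¹ * birkhoffSum τ f n x) atTop}) = 0 := by
  set avg : ℕ → X → ℝ := fun n x => (n:ℝ)⁻¹ * birkhoffSum τ f n x with havgdef
  have havg0 : ∀ n x, 0 ≤ avg n x := fun n x => (sum_nonneg_avg hf0 hf1 n x).1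
  have havg1 : ∀ n x, avg n x ≤ 1 := fun n x => (sum_nonneg_avg hf0 hf1 n x).2
  have hSm : ∀ n, Measurable (fun x => birkhoffSum τ f n x) := fun n =>
    Finset.measurable_sum _ fun k _ => hfm.comp (hτm.iterate k)
  have havgm : ∀ n, Measurable (avg n) := fun n => (hSm n).const_mul _
  have hLinv : ∀ x, liminf (fun n => avg n (τ x)) atTop = liminf (fun n => avg n x) atTop :=
    fun x => liminf_eq_of_tendsto_sub (fun n => havg0 n _) (fun n => havg1 n _)
      (fun n => havg0 n _) (fun n => havg1 n _) (avg_diff_tendsto hf0 hf1 x)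
  have hUinv : ∀ x, limsup (fun n => avg n (τ x)) atTop = limsup (fun n => avg n x) atTop :=
    fun x => limsup_eq_of_tendsto_sub (fun n => havg0 n _) (fun n => havg1 n _)
      (fun n => havg0 n _) (fun n => havg1 n _) (avg_diff_tendsto hf0 hf1 x)
  set E : Set X := {x | liminf (fun n => avg n x) atTop ≤ a}
    ∩ {x | b ≤ limsup (fun n => avg n x) atTop} with hEdef
  have hEmeas : MeasurableSet E :=
    (measurableSet_le (Measurable.liminf havgm) measurable_const).inter
      (measurableSet_le measurable_const (Measurable.limsup havgm))
  have hEinv : τ ⁻¹' E = E := by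
    ext x
    simp only [hEdef, Set.mem_preimage, Set.mem_inter_iff, Set.mem_setOf_eq]
    rw [hLinv x, hUinv x]
  set ν : Measure X := μ.restrict E with hνdef
  have hτν : MeasurePreserving τ ν ν := by
    refine ⟨hτm, ?_⟩
    have h1 : Measure.map τ (μ.restrict (τ ⁻¹' E)) = (Measure.map τ μ).restrict E :=
      (Measure.restrict_map hτm hEmeas).symm
    rw [hνdef, ← hEinv, h1, hτ.map_eq, hEinv]
  have hfintμ : Integrable f μ := (integrable_const (1:ℝ)).mono' hfm.aestronglyMeasurable
      (ae_of_all _ fun x => by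
        rw [Real.norm_eq_abs, abs_of_nonneg (hf0 x)]; exact hf1 x)
  set a' : ℝ := a + (b-a)/3 with ha'def
  set b' : ℝ := b - (b-a)/3 with hb'def
  have ha'b' : a' < b' := by rw [ha'def, hb'def]; linarith
  set C : ℝ := 1 + |a'| + |b'| with hCdef
  have hC0 : 0 ≤ C := by positivity
  have key : ∀ (g : X → ℝ), Measurable g → (∀ x, |g x| ≤ C) →
      E ⊆ {y | ∃ n, 0 < birkhoffSum τ g n y} → 0 ≤ ∫ x in E, g x ∂μ := by
    intro g hgm hgb hsub
    have h := maximal_ergodic ν hτm hτν hgm hC0 hgb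
    have hE1meas : MeasurableSet {y | ∃ n, 0 < birkhoffSum τ g n y} := by
      have heq : {y | ∃ n, 0 < birkhoffSum τ g n y}
          = ⋃ n, {y | 0 < birkhoffSum τ g n y} := by ext y; simp
      rw [heq]
      exact MeasurableSet.iUnion fun n => measurableSet_lt measurable_const
        (Finset.measurable_sum _ fun k _ => hgm.comp (hτm.iterate k))
    rw [hνdef, Measure.restrict_restrict hE1meas,
      Set.inter_eq_self_of_subset_right hsub] at h
    exact h
  have habs : ∀ (c : ℝ), |c| ≤ |a'| + |b'| → ∀ x, |f x - c| ≤ C := by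
    intro c hc x
    rw [hCdef, abs_le]
    have h1 := hf0 x; have h2 := hf1 x
    have h3 := le_abs_self c; have h4 := neg_abs_le c
    constructor <;> linarith [abs_nonneg a', abs_nonneg b']
  have hsub1 : E ⊆ {y | ∃ n, 0 < birkhoffSum τ (fun x => f x - b') n y} := by
    intro x hx
    rcases hx with ⟨_, hU⟩
    by_contra hcon
    simp only [Set.mem_setOf_eq, not_exists, not_lt] at hcon
    have hbb : limsup (fun n => avg n x) atTop ≤ b' := by
      apply limsup_le_of_le
        ((isBoundedUnder_of ⟨0, fun n => havg0 n x⟩ :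
          IsBoundedUnder (· ≥ ·) atTop _).isCoboundedUnder_le)
      filter_upwards [eventually_ge_atTop 1] with n hn
      have h1 : birkhoffSum τ (fun y => f y - b') n x
          = birkhoffSum τ f n x - n * b' := by
        simp [birkhoffSum, Finset.sum_sub_distrib, Finset.sum_const,
          Finset.card_range, nsmul_eq_mul]
      have h2 := hcon n
      rw [h1, sub_nonpos] at h2
      have hn0 : (0:ℝ) < n := by exact_mod_cast hn
      rw [havgdef]
      dsimp only
      rw [inv_mul_le_iff₀ hn0]
      exact h2
    have : b ≤ b' := le_trans hU hbb
    rw [hb'def] at this; linarith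
  have hsub2 : E ⊆ {y | ∃ n, 0 < birkhoffSum τ (fun x => a' - f x) n y} := by
    intro x hx
    rcases hx with ⟨hL, _⟩
    by_contra hcon
    simp only [Set.mem_setOf_eq, not_exists, not_lt] at hcon
    have hbb : a' ≤ liminf (fun n => avg n x) atTop := by
      apply le_liminf_of_le
        ((isBoundedUnder_of ⟨1, fun n => havg1 n x⟩ :
          IsBoundedUnder (· ≤ ·) atTop _).isCoboundedUnder_ge)
      filter_upwards [eventually_ge_atTop 1] with n hn
      have h1 : birkhoffSum τ (fun y => a' - f y) n x
          = n * a' - birkhoffSum τ f n x := by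
        simp [birkhoffSum, Finset.sum_sub_distrib, Finset.sum_const,
          Finset.card_range, nsmul_eq_mul]
      have h2 := hcon n
      rw [h1, sub_nonpos] at h2
      have hn0 : (0:ℝ) < n := by exact_mod_cast hn
      rw [havgdef]
      dsimp only
      rw [le_inv_mul_iff₀ hn0]
      exact h2
    have : a' ≤ a := le_trans hbb hL
    rw [ha'def] at this; linarith
  have hI1 := key (fun x => f x - b') (hfm.sub measurable_const)
    (fun x => habs b' (le_add_of_nonneg_left (by positivity)) x) hsub1
  have hI2 := key (fun x => a' - f x) (measurable_const.sub hfm)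
    (fun x => by
      have := habs a' (by linarith [abs_nonneg a', abs_nonneg b']) x
      rwa [abs_sub_comm] at this) hsub2
  rw [integral_sub (hfintμ.integrableOn) (integrableOn_const (measure_ne_top μ E)),
    setIntegral_const, measureReal_def, sub_nonneg, smul_eq_mul] at hI1
  rw [integral_sub (integrableOn_const (measure_ne_top μ E) : IntegrableOn (fun _ => a') E μ) (hfintμ.integrableOn),
    setIntegral_const, measureReal_def, sub_nonneg, smul_eq_mul] at hI2
  have hm0 : (0:ℝ) ≤ (μ E).toReal := ENNReal.toReal_nonneg
  have hmeq : (μ E).toReal = 0 := by nlinarith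
  have := measure_ne_top μ E
  rcases (ENNReal.toReal_eq_zero_iff _).1 hmeq with h | h
  · exact h
  · exact absurd h this

end Osc


/-- Burton–Easton: if a.e. point of a probability space visits `Y` infinitely
often under an invertible measure-preserving map `T`, then a.e. point visits
`Y` with a well-defined strictly positive frequency. -/
theorem positive_visit_frequency {X : Type*} [MeasurableSpace X]
    (μ : Measure X) [IsProbabilityMeasure μ] (T : X ≃ᵐ X)
    (hT : MeasurePreserving T μ μ) (Y : Set X) (hY : MeasurableSet Y)
    (hYpos : 0 < μ Y)
    (hio : ∀ᵐ x ∂μ, {n : ℕ | T^[n] x ∈ Y}.Infinite) :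
    ∀ᵐ x ∂μ, ∃ c : ℝ, 0 < c ∧
      Tendsto
        (fun n : ℕ =>
          (((Finset.Icc 1 n).filter fun k => T^[k] x ∈ Y).card : ℝ) / n)
        atTop (nhds c) := by
  set f : X → ℝ := Y.indicator (fun _ => (1:ℝ)) with hfdef
  have hfm : Measurable f := measurable_const.indicator hY
  have hf0 : ∀ x, 0 ≤ f x := fun x => Set.indicator_nonneg (fun _ _ => zero_le_one) x
  have hf1 : ∀ x, f x ≤ 1 := by
    intro x
    by_cases h : x ∈ Y <;> simp [hfdef, Set.indicator_apply, h]
  set avg : ℕ → X → ℝ := fun n x => (n:ℝ)⁻¹ * birkhoffSum (⇑T) f n x with havgdef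
  have havg0 : ∀ n x, 0 ≤ avg n x := fun n x => (sum_nonneg_avg hf0 hf1 n x).1
  have havg1 : ∀ n x, avg n x ≤ 1 := fun n x => (sum_nonneg_avg hf0 hf1 n x).2
  have havgm : ∀ n, Measurable (avg n) := fun n =>
    (Finset.measurable_sum _ fun k _ => hfm.comp (T.measurable.iterate k)).const_mul _
  set U : X → ℝ := fun x => limsup (fun n => avg n x) atTop with hUdef
  set L : X → ℝ := fun x => liminf (fun n => avg n x) atTop with hLdef
  have hU0 : ∀ x, 0 ≤ U x :=
    fun x => le_limsup_of_frequently_le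
      (Frequently.of_forall fun n => havg0 n x)
      (isBoundedUnder_of ⟨1, fun n => havg1 n x⟩)
  have hUinv : ∀ x, U (T x) = U x := fun x =>
    limsup_eq_of_tendsto_sub (fun n => havg0 n _) (fun n => havg1 n _)
      (fun n => havg0 n _) (fun n => havg1 n _) (avg_diff_tendsto hf0 hf1 x)
  -- the null set where oscillation may occur
  set N1 : Set X := ⋃ p : ℚ × ℚ,
    if ((p.1 : ℝ) < (p.2 : ℝ)) then
      ({x | L x ≤ (p.1 : ℝ)} ∩ {x | (p.2 : ℝ) ≤ U x}) else ∅ with hN1def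
  have hN1 : μ N1 = 0 := by
    refine measure_iUnion_null fun p => ?_
    split_ifs with h
    · exact oscillation_null μ T.measurable hT hfm hf0 hf1 h
    · exact measure_empty
  have hconv : ∀ x ∉ N1, Tendsto (fun n => avg n x) atTop (nhds (U x)) := by
    intro x hx
    have hbdd1 : IsBoundedUnder (· ≤ ·) atTop (fun n => avg n x) :=
      isBoundedUnder_of ⟨1, fun n => havg1 n x⟩
    have hbdd0 : IsBoundedUnder (· ≥ ·) atTop (fun n => avg n x) :=
      isBoundedUnder_of ⟨0, fun n => havg0 n x⟩
    have hLU : L x = U x := by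
      rcases le_or_gt (U x) (L x) with h | h
      · exact le_antisymm (liminf_le_limsup hbdd1 hbdd0) h
      · exfalso
        obtain ⟨q, hq1, hq2⟩ := exists_rat_btwn h
        obtain ⟨r, hr1, hr2⟩ := exists_rat_btwn hq2
        apply hx
        refine Set.mem_iUnion.2 ⟨(q, r), ?_⟩
        rw [if_pos (by exact_mod_cast hr1)]
        exact ⟨hq1.le, hr2.le⟩
    exact tendsto_of_liminf_eq_limsup hLU rfl hbdd1 hbdd0
  set B : Set X := {x | U x ≤ 0} with hBdef
  have hUm : Measurable U := Measurable.limsup havgm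
  have hBmeas : MeasurableSet B := measurableSet_le hUm measurable_const
  have hBinv : ⇑T ⁻¹' B = B := by
    ext x; simp only [hBdef, Set.mem_preimage, Set.mem_setOf_eq, hUinv x]
  have hνB : MeasurePreserving ⇑T (μ.restrict B) (μ.restrict B) := by
    refine ⟨T.measurable, ?_⟩
    have h1 : Measure.map ⇑T (μ.restrict (⇑T ⁻¹' B)) = (Measure.map ⇑T μ).restrict B :=
      (Measure.restrict_map T.measurable hBmeas).symm
    rw [← hBinv, h1, hT.map_eq, hBinv]
  have hYB : μ (Y ∩ B) = 0 := by
    have hintk : ∀ k : ℕ, ∫ x in B, f (T^[k] x) ∂μ = (μ (Y ∩ B)).toReal := by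
      intro k
      have h1 : ∫ x in B, f (T^[k] x) ∂μ = ∫ x, f x ∂(μ.restrict B) := by
        have h0 := integral_map (μ := μ.restrict B) (f := f)
          (T.measurable.iterate k).aemeasurable
          (by rw [(hνB.iterate k).map_eq]; exact hfm.aestronglyMeasurable)
        rw [(hνB.iterate k).map_eq] at h0
        exact h0.symm
      rw [h1, hfdef]
      have h2 : ∫ x, Y.indicator (fun _ => (1:ℝ)) x ∂(μ.restrict B)
          = ((μ.restrict B) Y).toReal := integral_indicator_one hY
      rw [h2, Measure.restrict_apply hY]
    have hintf : ∀ k : ℕ, Integrable (fun x => f (T^[k] x)) (μ.restrict B) := by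
      intro k
      refine (integrable_const (1:ℝ)).mono'
        ((hfm.comp (T.measurable.iterate k)).aestronglyMeasurable) (ae_of_all _ fun x => ?_)
      rw [Real.norm_eq_abs, abs_of_nonneg (hf0 _)]
      exact hf1 _
    have havgint : ∀ n : ℕ, 1 ≤ n → ∫ x in B, avg n x ∂μ = (μ (Y ∩ B)).toReal := by
      intro n hn
      have h1 : ∫ x in B, avg n x ∂μ
          = (n:ℝ)⁻¹ * ∑ k ∈ Finset.range n, ∫ x in B, f (T^[k] x) ∂μ := by
        rw [havgdef]
        dsimp only
        rw [integral_const_mul]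
        congr 1
        exact integral_finset_sum _ fun k _ => hintf k
      rw [h1]
      have h2 : ∑ k ∈ Finset.range n, ∫ x in B, f (T^[k] x) ∂μ
          = n * (μ (Y ∩ B)).toReal := by
        rw [Finset.sum_congr rfl fun k _ => hintk k]
        simp
      rw [h2, ← mul_assoc, inv_mul_cancel₀ (Nat.cast_ne_zero.mpr (by omega : n ≠ 0) : ((n:ℕ):ℝ) ≠ 0), one_mul]
    have haeconv : ∀ᵐ x ∂(μ.restrict B), Tendsto (fun n => avg n x) atTop (nhds (U x)) := by
      apply ae_restrict_of_ae
      filter_upwards [measure_eq_zero_iff_ae_notMem.mp hN1] with x hx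
      exact hconv x hx
    have hlim : Tendsto (fun n => ∫ x in B, avg n x ∂μ) atTop (nhds (∫ x in B, U x ∂μ)) := by
      apply tendsto_integral_of_dominated_convergence (bound := fun _ => (1:ℝ))
      · exact fun n => (havgm n).aestronglyMeasurable
      · exact integrable_const 1
      · intro n
        refine ae_of_all _ fun x => ?_
        rw [Real.norm_eq_abs, abs_of_nonneg (havg0 n x)]
        exact havg1 n x
      · exact haeconv
    have hlim2 : Tendsto (fun n => ∫ x in B, avg n x ∂μ) atTop
        (nhds ((μ (Y ∩ B)).toReal)) := by
      refine Tendsto.congr' ?_ tendsto_const_nhds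
      filter_upwards [eventually_ge_atTop 1] with n hn
      exact (havgint n hn).symm
    have hUzero : ∫ x in B, U x ∂μ = 0 := by
      rw [setIntegral_congr_fun hBmeas (g := fun _ => (0:ℝ))
        (fun x hx => le_antisymm hx (hU0 x))]
      simp
    have := tendsto_nhds_unique hlim2 hlim
    rw [hUzero] at this
    have hne := measure_ne_top μ (Y ∩ B)
    rcases (ENNReal.toReal_eq_zero_iff _).1 this with h | h
    · exact h
    · exact absurd h hne
  set N2 : Set X := ⋃ n : ℕ, (T^[n]) ⁻¹' (Y ∩ B) with hN2def
  have hN2 : μ N2 = 0 := by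
    refine measure_iUnion_null fun n => ?_
    rw [(hT.iterate n).measure_preimage (hY.inter hBmeas).nullMeasurableSet]
    exact hYB
  have hB0 : μ B = 0 := by
    have hsub : B ⊆ N2 ∪ {x | ¬ {n : ℕ | T^[n] x ∈ Y}.Infinite} := by
      intro x hxB
      by_cases hio' : {n : ℕ | T^[n] x ∈ Y}.Infinite
      · left
        obtain ⟨n, hn⟩ := hio'.nonempty
        have hTB : ∀ m : ℕ, T^[m] x ∈ B := by
          intro m
          induction m with
          | zero => exact hxB
          | succ m ih =>
              rw [Function.iterate_succ_apply']
              have hmem : (⇑T)^[m] x ∈ ⇑T ⁻¹' B := by rw [hBinv]; exact ih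
              exact hmem
        exact Set.mem_iUnion.2 ⟨n, ⟨hn, hTB n⟩⟩
      · right; exact hio'
    refine measure_mono_null hsub (measure_union_null hN2 ?_)
    exact ae_iff.mp hio
  filter_upwards [measure_eq_zero_iff_ae_notMem.mp hN1, measure_eq_zero_iff_ae_notMem.mp hB0]
    with x hxN1 hxB
  refine ⟨U x, lt_of_not_ge hxB, ?_⟩
  have h1 : Tendsto (fun n => avg n x) atTop (nhds (U x)) := hconv x hxN1
  have h2 : Tendsto (fun n => avg n (T x)) atTop (nhds (U x)) := by
    have hd := avg_diff_tendsto (τ := ⇑T) hf0 hf1 x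
    have h3 := h1.add hd
    rw [add_zero] at h3
    refine h3.congr fun n => ?_
    ring
  refine h2.congr fun n => ?_
  have heq1 : birkhoffSum (⇑T) f n (T x)
      = (((Finset.range n).filter fun k => T^[k+1] x ∈ Y).card : ℝ) := by
    rw [birkhoffSum]
    have : ∀ k, f (T^[k] (T x)) = if T^[k+1] x ∈ Y then (1:ℝ) else 0 := by
      intro k
      rw [← Function.iterate_succ_apply]
      simp [hfdef, Set.indicator_apply]
      exact if_congr Iff.rfl rfl rfl
    rw [Finset.sum_congr rfl fun k _ => this k]
    rw [Finset.sum_boole]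
  have heq2 : ((Finset.range n).filter fun k => T^[k+1] x ∈ Y).card
      = ((Finset.Icc 1 n).filter fun k => T^[k] x ∈ Y).card := by
    refine Finset.card_bij' (fun k _ => k + 1) (fun k _ => k - 1) ?_ ?_ ?_ ?_
    · intro a ha
      simp only [Finset.mem_filter, Finset.mem_range] at ha
      simp only [Finset.mem_filter, Finset.mem_Icc]
      exact ⟨⟨by omega, by omega⟩, ha.2⟩
    · intro a ha
      simp only [Finset.mem_filter, Finset.mem_Icc] at ha
      simp only [Finset.mem_filter, Finset.mem_range]
      have hsub : a - 1 + 1 = a := by omega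
      exact ⟨by omega, by rw [hsub]; exact ha.2⟩
    · intro a _; rfl
    · intro a ha
      simp only [Finset.mem_filter, Finset.mem_Icc] at ha
      omega
  rw [havgdef]
  dsimp only
  rw [heq1, heq2, div_eq_inv_mul]
end
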